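/- Let A be an n×n zero-one matrix with zero diagonal satisfying AJ = JA = kJ and A² = tI + λA + μ(J − I − A), respecting a homogeneous partition π with a cells of size b (ab = n), and suppose U_i·A = (λ+b−k)U_i + μ(J − U_i) for all i ∈ {1,…,a}. Then for every positive integer j, the block-circulant matrix M_j(A) of order (ja+1)n with first block-row (A, U₁,…,U₁ (j times), U₂,…,U₂ (j times), …, U_a,…,U_a (j times)) is the adjacency matrix of a DSRG with parameters ((ja+1)n, jn+k, jb+t, jb+λ, jb+μ). -/

import Mathlib

open Matrix


lemma count_div {mm kk i : ℕ} (hk : 0 < kk) (hi : i < mm) :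
    ∑ x ∈ Finset.range (mm * kk), (if x / kk = i then (1:ℝ) else 0) = kk := by
  have hdiv : ∀ x : ℕ, x / kk = i ↔ i * kk ≤ x ∧ x < i * kk + kk := by
    intro x
    have h1 : i ≤ x / kk ↔ i * kk ≤ x := Nat.le_div_iff_mul_le hk
    have h2 : x / kk < i + 1 ↔ x < (i + 1) * kk := Nat.div_lt_iff_lt_mul hk
    have h3 : (i + 1) * kk = i * kk + kk := by ring
    omega
  have hfilter : Finset.filter (fun x => x / kk = i) (Finset.range (mm * kk))
      = Finset.Ico (i * kk) (i * kk + kk) := by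
    ext x
    have h3 : (i + 1) * kk ≤ mm * kk := Nat.mul_le_mul_right kk hi
    have h4 : (i + 1) * kk = i * kk + kk := by ring
    simp only [Finset.mem_filter, Finset.mem_range, Finset.mem_Ico, hdiv]
    omega
  rw [Finset.sum_boole, hfilter, Nat.card_Ico]
  simp

lemma shift_count {a j : ℕ} (hj : 0 < j) {i0 : ℕ} (hi : i0 < a) :
    ∑ e : Fin (j * a + 1), (if e = 0 then 0 else if ((e : ℕ) - 1) / j = i0 then (1:ℝ) else 0)
      = j := by
  have this1 : ∀ e : Fin (j * a + 1),
      (if e = 0 then 0 else if ((e : ℕ) - 1) / j = i0 then (1:ℝ) else 0)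
      = (fun x : ℕ => if x = 0 then 0 else if (x - 1) / j = i0 then (1:ℝ) else 0) (e : ℕ) := by
    intro e
    by_cases h : e = 0
    · subst h; simp only [Fin.val_zero, ↓reduceIte]
    · have h' : (e:ℕ) ≠ 0 := by rwa [Ne, Fin.val_eq_zero_iff]
      simp only [h, h', if_false]
  have hr := Fin.sum_univ_eq_sum_range
    (fun x : ℕ => if x = 0 then 0 else if (x - 1) / j = i0 then (1:ℝ) else 0) (j * a + 1)
  rw [Finset.sum_congr rfl (fun e _ => this1 e), hr, Finset.sum_range_succ']
  simp only [Nat.add_sub_cancel, Nat.succ_ne_zero, if_false, reduceIte]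
  rw [mul_comm j a]
  simpa using count_div hj hi

lemma shift_count' {a j : ℕ} (hj : 0 < j) {i0 : ℕ} (hi : i0 < a) :
    ∑ e : Fin (j * a + 1), (if e = 0 then 0 else if i0 = ((e : ℕ) - 1) / j then (1:ℝ) else 0)
      = j := by
  rw [← shift_count hj hi]
  refine Finset.sum_congr rfl fun e _ => ?_
  by_cases h1 : e = 0
  · simp [h1]
  · simp only [h1, if_false]
    by_cases h2 : i0 = ((e : ℕ) - 1) / j
    · rw [if_pos h2, if_pos h2.symm]
    · rw [if_neg h2, if_neg fun hh => h2 hh.symm]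


/-- The all-ones matrix. -/
def onesMat (n : ℕ) : Matrix (Fin n) (Fin n) ℝ := Matrix.of fun _ _ => 1

/-- The all-ones matrix indexed by blocks. -/
def Jbig (N n : ℕ) : Matrix (Fin N × Fin n) (Fin N × Fin n) ℝ := Matrix.of fun _ _ => 1

/-- `Ublk a b i`: columns in the `i`-th cell are all-ones, other entries zero. -/
def Ublk (a b : ℕ) (i : ℕ) : Matrix (Fin (a * b)) (Fin (a * b)) ℝ :=
  Matrix.of fun _ c => if (c : ℕ) / b = i then 1 else 0

/-- The π-join of `A` in power `j`: the block-circulant matrix of block order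
`j*a+1` whose first block-row is `(A, U₁,…,U₁, U₂,…,U₂, …, U_a,…,U_a)`,
each `Uᵢ` repeated `j` times. -/
def Mjoin (a b j : ℕ) (A : Matrix (Fin (a * b)) (Fin (a * b)) ℝ) :
    Matrix (Fin (j * a + 1) × Fin (a * b)) (Fin (j * a + 1) × Fin (a * b)) ℝ :=
  fun p q =>
    if q.1 - p.1 = 0 then A p.2 q.2
    else Ublk a b ((((q.1 - p.1 : Fin (j * a + 1)) : ℕ) - 1) / j) p.2 q.2

/-- Main sufficiency theorem: if `A` is the adjacency matrix of a DSRG with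
parameters `(ab,k,t,λ,μ)` respecting a homogeneous partition into `a` cells of
size `b`, whose quotient condition `Uᵢ·A = (λ+b−k)Uᵢ + μ(J−Uᵢ)` holds, then for
every positive integer `j` the π-join `M_j(A)` is the adjacency matrix of a
DSRG with parameters `((ja+1)n, jn+k, jb+t, jb+λ, jb+μ)`. -/
theorem pijoin_is_dsrg (a b j k t l m : ℕ) (ha : 0 < a) (hb : 0 < b) (hj : 0 < j)
    (A : Matrix (Fin (a * b)) (Fin (a * b)) ℝ)
    (h01 : ∀ i j', A i j' = 0 ∨ A i j' = 1)
    (hdiag : ∀ i, A i i = 0)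
    (hAJ : A * onesMat (a * b) = (k : ℝ) • onesMat (a * b))
    (hJA : onesMat (a * b) * A = (k : ℝ) • onesMat (a * b))
    (hA2 : A * A = (t : ℝ) • (1 : Matrix (Fin (a * b)) (Fin (a * b)) ℝ) + (l : ℝ) • A
            + (m : ℝ) • (onesMat (a * b) - 1 - A))
    (hquot : ∀ i : ℕ, i < a →
      Ublk a b i * A = ((l : ℝ) + (b : ℝ) - (k : ℝ)) • Ublk a b i
        + (m : ℝ) • (onesMat (a * b) - Ublk a b i)) :
    Fintype.card (Fin (j * a + 1) × Fin (a * b)) = (j * a + 1) * (a * b) ∧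
    (∀ p q, Mjoin a b j A p q = 0 ∨ Mjoin a b j A p q = 1) ∧
    (∀ p, Mjoin a b j A p p = 0) ∧
    Mjoin a b j A * Jbig (j * a + 1) (a * b)
      = ((j * (a * b) + k : ℕ) : ℝ) • Jbig (j * a + 1) (a * b) ∧
    Jbig (j * a + 1) (a * b) * Mjoin a b j A
      = ((j * (a * b) + k : ℕ) : ℝ) • Jbig (j * a + 1) (a * b) ∧
    Mjoin a b j A * Mjoin a b j A
      = ((j * b + t : ℕ) : ℝ) • (1 : Matrix (Fin (j * a + 1) × Fin (a * b))
            (Fin (j * a + 1) × Fin (a * b)) ℝ)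
        + ((j * b + l : ℕ) : ℝ) • Mjoin a b j A
        + ((j * b + m : ℕ) : ℝ) • (Jbig (j * a + 1) (a * b) - 1 - Mjoin a b j A) := by
  have hn : 0 < a * b := Nat.mul_pos ha hb
  set N := j * a + 1 with hN
  -- row and column sums of A
  have rowA : ∀ r : Fin (a * b), ∑ s, A r s = (k : ℝ) := by
    intro r
    have h := congr_fun (congr_fun hAJ r) ⟨0, hn⟩
    simpa [Matrix.mul_apply, onesMat, Matrix.smul_apply] using h
  have colA : ∀ c : Fin (a * b), ∑ s, A s c = (k : ℝ) := by
    intro c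
    have h := congr_fun (congr_fun hJA ⟨0, hn⟩) c
    simpa [Matrix.mul_apply, onesMat, Matrix.smul_apply] using h
  have cdiv : ∀ c : Fin (a * b), (c : ℕ) / b < a :=
    fun c => (Nat.div_lt_iff_lt_mul hb).mpr c.isLt
  have ielt : ∀ e : Fin N, e ≠ 0 → ((e : ℕ) - 1) / j < a := by
    intro e he
    have h1 : (e : ℕ) < j * a + 1 := e.isLt
    have h2 : (e : ℕ) ≠ 0 := by
      intro h
      exact he (Fin.ext (by simpa using h))
    refine (Nat.div_lt_iff_lt_mul hj).mpr ?_
    have h3 : a * j = j * a := Nat.mul_comm a j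
    omega
  have Urow : ∀ i0 : ℕ, i0 < a →
      ∑ s : Fin (a * b), (if (s : ℕ) / b = i0 then (1:ℝ) else 0) = b := by
    intro i0 hi
    calc ∑ s : Fin (a * b), (if (s : ℕ) / b = i0 then (1:ℝ) else 0)
        = ∑ x ∈ Finset.range (a * b), (if x / b = i0 then (1:ℝ) else 0) :=
          Fin.sum_univ_eq_sum_range (fun x => if x / b = i0 then (1:ℝ) else 0) (a * b)
      _ = b := count_div hb hi
  refine ⟨by simp, ?_, ?_, ?_, ?_, ?_⟩
  · -- 0-1 entries
    intro p q
    by_cases h : q.1 - p.1 = 0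
    · simp only [Mjoin, h, if_true]
      exact h01 _ _
    · simp only [Mjoin, h, if_false, Ublk, Matrix.of_apply]
      split
      · right; rfl
      · left; rfl
  · -- zero diagonal
    intro p
    simp [Mjoin, sub_self, hdiag]
  · -- M J = (jn+k) J
    ext p q
    rw [Matrix.mul_apply, Fintype.sum_prod_type]
    have step : ∀ r1 : Fin N,
        ∑ r2, Mjoin a b j A p (r1, r2) * Jbig N (a * b) (r1, r2) q
          = (if r1 - p.1 = 0 then (k : ℝ) else (b : ℝ)) := by
      intro r1
      by_cases h : r1 - p.1 = 0
      · simp only [Mjoin, h, if_true, Jbig, Matrix.of_apply, mul_one]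
        exact rowA p.2
      · simp only [Mjoin, h, if_false, Ublk, Jbig, Matrix.of_apply, mul_one]
        exact Urow _ (ielt _ h)
    rw [Finset.sum_congr rfl fun r1 _ => step r1]
    have split1 : ∀ r1 : Fin N, (if r1 - p.1 = 0 then (k : ℝ) else (b : ℝ))
        = (b : ℝ) + (if r1 - p.1 = 0 then ((k : ℝ) - b) else 0) := by
      intro r1; split <;> ring
    rw [Finset.sum_congr rfl fun r1 _ => split1 r1, Finset.sum_add_distrib,
      Finset.sum_const, Finset.card_univ, Fintype.card_fin]
    have reidx : (∑ r1 : Fin N, if r1 - p.1 = 0 then ((k : ℝ) - b) else 0)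
        = ∑ e : Fin N, if e = 0 then ((k : ℝ) - b) else 0 :=
      Fintype.sum_equiv (Equiv.subRight p.1) _ _ (fun x => rfl)
    rw [reidx]
    simp only [Finset.sum_ite_eq', Finset.mem_univ, if_true, Jbig, Matrix.smul_apply,
      Matrix.of_apply, smul_eq_mul, mul_one]
    push_cast
    ring
  · -- J M = (jn+k) J
    ext p q
    rw [Matrix.mul_apply, Fintype.sum_prod_type]
    have step : ∀ r1 : Fin N,
        ∑ r2, Jbig N (a * b) p (r1, r2) * Mjoin a b j A (r1, r2) q
          = (if q.1 - r1 = 0 then (k : ℝ)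
              else (a * b : ℝ) * (if (q.2 : ℕ) / b = (((q.1 - r1 : Fin N) : ℕ) - 1) / j
                then (1:ℝ) else 0)) := by
      intro r1
      by_cases h : q.1 - r1 = 0
      · simp only [Mjoin, h, if_true, Jbig, Matrix.of_apply, one_mul]
        exact colA q.2
      · simp only [Mjoin, h, if_false, Ublk, Jbig, Matrix.of_apply, one_mul]
        by_cases hcc : (q.2 : ℕ) / b = (((q.1 - r1 : Fin N) : ℕ) - 1) / j
        · simp only [hcc, if_true, Finset.sum_const, Finset.card_univ, Fintype.card_fin,
            nsmul_eq_mul, mul_one]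
          push_cast
          ring
        · simp [hcc]
    rw [Finset.sum_congr rfl fun r1 _ => step r1]
    have reidx : (∑ r1 : Fin N, (if q.1 - r1 = 0 then (k : ℝ)
            else (a * b : ℝ) * (if (q.2 : ℕ) / b = (((q.1 - r1 : Fin N) : ℕ) - 1) / j
              then (1:ℝ) else 0)))
        = ∑ e : Fin N, (if e = 0 then (k : ℝ)
            else (a * b : ℝ) * (if (q.2 : ℕ) / b = ((e : ℕ) - 1) / j then (1:ℝ) else 0)) :=
      Fintype.sum_equiv (Equiv.subLeft q.1) _ _ (fun x => rfl)
    rw [reidx]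
    have split1 : ∀ e : Fin N, (if e = 0 then (k : ℝ)
            else (a * b : ℝ) * (if (q.2 : ℕ) / b = ((e : ℕ) - 1) / j then (1:ℝ) else 0))
        = (if e = 0 then (k : ℝ) else 0)
          + (a * b : ℝ) * (if e = 0 then 0
              else (if (q.2 : ℕ) / b = ((e : ℕ) - 1) / j then (1:ℝ) else 0)) := by
      intro e; by_cases h : e = 0 <;> simp [h]
    rw [Finset.sum_congr rfl fun e _ => split1 e, Finset.sum_add_distrib, ← Finset.mul_sum,
      shift_count' hj (cdiv q.2)]
    simp only [Finset.sum_ite_eq', Finset.mem_univ, if_true, Jbig, Matrix.smul_apply,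
      Matrix.of_apply, smul_eq_mul, mul_one]
    push_cast
    ring
  · -- M² = (jb+t) I + (jb+l) M + (jb+m)(J - I - M)
    ext p q
    rw [Matrix.mul_apply, Fintype.sum_prod_type]
    set d : Fin N := q.1 - p.1 with hd
    set ind : Fin N → ℝ :=
      fun u => if (q.2 : ℕ) / b = ((u : ℕ) - 1) / j then 1 else 0 with hind
    set AA : ℝ := ∑ s, A p.2 s * A s q.2 with hAA
    set G : Fin N → ℝ := fun e =>
      if e = 0 then (if d = 0 then AA else (k : ℝ) * ind d)
      else if d - e = 0 then ((l : ℝ) + b - k) * ind e + m * (1 - ind e)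
      else (b : ℝ) * ind (d - e) with hG
    have step : ∀ r1 : Fin N,
        ∑ r2, Mjoin a b j A p (r1, r2) * Mjoin a b j A (r1, r2) q = G (r1 - p.1) := by
      intro r1
      have he2 : q.1 - r1 = d - (r1 - p.1) := by rw [hd, sub_sub_sub_cancel_right]
      by_cases h0 : r1 - p.1 = 0
      · by_cases hdd : d = 0
        · have hq : q.1 - r1 = 0 := by rw [he2, hdd, h0, sub_zero]
          simp only [Mjoin, h0, hq, if_true, hG, hdd, hAA]
        · have hq : q.1 - r1 = d := by rw [he2, h0, sub_zero]
          have hq0 : ¬ (q.1 - r1 = 0) := by rw [hq]; exact hdd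
          simp only [Mjoin, h0, if_true, hq0, if_false, hq, Ublk, Matrix.of_apply,
            hG, hdd, hind]
          by_cases hcc : (q.2 : ℕ) / b = ((d : ℕ) - 1) / j
          · simp [hcc, rowA]
          · simp [hcc]
      · have hne : r1 - p.1 ≠ 0 := h0
        by_cases h1 : q.1 - r1 = 0
        · have hde : d - (r1 - p.1) = 0 := by rw [← he2, h1]
          have hqA := congr_fun (congr_fun (hquot _ (ielt _ hne)) p.2) q.2
          simp only [Matrix.mul_apply, Matrix.add_apply, Matrix.smul_apply,
            Matrix.sub_apply, Ublk, onesMat, Matrix.of_apply, smul_eq_mul] at hqA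
          simp only [Mjoin, h0, if_false, h1, if_true, Ublk, Matrix.of_apply,
            hG, hne, if_neg hne, hde, if_pos hde, hind]
          exact hqA
        · have hde : d - (r1 - p.1) ≠ 0 := by rw [← he2]; exact h1
          simp only [Mjoin, h0, if_false, h1, Ublk, Matrix.of_apply,
            hG, if_neg hne, if_neg hde, hind, ← he2]
          by_cases hcc : (q.2 : ℕ) / b = (((q.1 - r1 : Fin N) : ℕ) - 1) / j
          · simp [hcc, Urow _ (ielt _ hne)]
          · simp [hcc]
    rw [Finset.sum_congr rfl fun r1 _ => step r1]
    have reidx : (∑ r1 : Fin N, G (r1 - p.1)) = ∑ e : Fin N, G e :=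
      Fintype.sum_equiv (Equiv.subRight p.1) _ _ (fun x => rfl)
    rw [reidx]
    by_cases hdd : d = 0
    · -- diagonal blocks
      have hGval : ∀ e : Fin N, G e
          = (if e = 0 then AA else 0)
            + (b : ℝ) * (if e = 0 then 0 else ind (d - e)) := by
        intro e
        by_cases h : e = 0
        · simp [hG, h, hdd]
        · have h2 : d - e ≠ 0 := by
            rw [hdd, zero_sub]
            simpa [neg_eq_zero] using h
          simp [hG, h, h2]
      rw [Finset.sum_congr rfl fun e _ => hGval e, Finset.sum_add_distrib, ← Finset.mul_sum]
      have reidx2 : (∑ e : Fin N, (if e = 0 then 0 else ind (d - e)))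
          = ∑ u : Fin N, (if u = 0 then 0 else ind u) := by
        refine Fintype.sum_equiv (Equiv.subLeft d) _ _ fun x => ?_
        simp only [Equiv.subLeft_apply]
        by_cases hx : x = 0
        · simp [hx, hdd]
        · have : d - x ≠ 0 := by
            rw [hdd, zero_sub]
            simpa [neg_eq_zero] using hx
          simp [hx, this]
      rw [reidx2, hind]
      rw [shift_count' hj (cdiv q.2)]
      -- now identify the right side
      have hpq1 : p.1 = q.1 := (sub_eq_zero.mp hdd).symm
      have hAAval := congr_fun (congr_fun hA2 p.2) q.2
      simp only [Matrix.mul_apply, Matrix.add_apply, Matrix.smul_apply, Matrix.sub_apply,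
        Matrix.one_apply, onesMat, Matrix.of_apply, smul_eq_mul] at hAAval
      simp only [Finset.sum_ite_eq', Finset.mem_univ, if_true]
      rw [hAA, hAAval]
      have hMpq : Mjoin a b j A p q = A p.2 q.2 := by
        simp only [Mjoin, ← hd, hdd, if_true]
      have hone : (1 : Matrix (Fin N × Fin (a * b)) (Fin N × Fin (a * b)) ℝ) p q
          = (if p.2 = q.2 then (1:ℝ) else 0) := by
        rw [Matrix.one_apply]
        by_cases h : p = q
        · simp [h]
        · have : p.2 ≠ q.2 := fun hc => h (Prod.ext hpq1 hc)
          simp [h, this]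
      simp only [Matrix.add_apply, Matrix.smul_apply, Matrix.sub_apply, Jbig,
        Matrix.of_apply, smul_eq_mul, hone, hMpq]
      push_cast
      ring
    · -- off-diagonal blocks
      have hGval : ∀ e : Fin N, G e
          = (if e = 0 then (k : ℝ) * ind d else 0)
            + (if e = d then ((l : ℝ) + b - k) * ind d + m * (1 - ind d) else 0)
            + (b : ℝ) * (if e = 0 ∨ e = d then 0 else ind (d - e)) := by
        intro e
        by_cases h0 : e = 0
        · have h1 : ¬((0 : Fin N) = d) := fun hh => hdd hh.symm
          simp [hG, h0, h1, hdd]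
        · by_cases h1 : e = d
          · have h2 : d - e = 0 := by rw [h1, sub_self]
            simp [hG, h0, h1, h2, hdd]
          · have h2 : d - e ≠ 0 := sub_ne_zero.mpr fun hh => h1 hh.symm
            simp [hG, h0, h1, h2]
      rw [Finset.sum_congr rfl fun e _ => hGval e, Finset.sum_add_distrib,
        Finset.sum_add_distrib, ← Finset.mul_sum]
      have reidx2 : (∑ e : Fin N, (if e = 0 ∨ e = d then 0 else ind (d - e)))
          = ∑ u : Fin N, (if u = d ∨ u = 0 then 0 else ind u) := by
        refine Fintype.sum_equiv (Equiv.subLeft d) _ _ fun x => ?_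
        simp only [Equiv.subLeft_apply]
        have hc1 : d - x = d ↔ x = 0 := sub_eq_self
        have hc2 : d - x = 0 ↔ x = d := by rw [sub_eq_zero]; exact eq_comm
        by_cases hx0 : x = 0
        · simp [hx0, hc1.mpr hx0]
        · by_cases hxd : x = d
          · simp [hxd, hc2.mpr hxd]
          · have t1 : d - x ≠ d := fun h => hx0 (hc1.mp h)
            have t2 : d - x ≠ 0 := fun h => hxd (hc2.mp h)
            simp [hx0, hxd, t1, t2]
      rw [reidx2]
      have hsplit : ∀ u : Fin N, (if u = d ∨ u = 0 then (0:ℝ) else ind u)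
          = (if u = 0 then 0 else ind u) - (if u = d then (if u = 0 then 0 else ind u) else 0) := by
        intro u
        by_cases h0 : u = 0
        · simp [h0]
        · by_cases h1 : u = d
          · simp [h0, h1]
          · simp [h0, h1]
      rw [Finset.sum_congr rfl fun u _ => hsplit u, Finset.sum_sub_distrib]
      rw [hind, shift_count' hj (cdiv q.2)]
      simp only [Finset.sum_ite_eq', Finset.mem_univ, if_true, if_neg hdd]
      -- right-hand side
      have hne1 : p ≠ q := by
        intro hc
        exact hdd (by rw [hd, hc, sub_self])
      have hMpq : Mjoin a b j A p q = ind d := by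
        simp only [Mjoin, ← hd, hdd, if_false, Ublk, Matrix.of_apply, hind]
      simp only [Matrix.add_apply, Matrix.smul_apply, Matrix.sub_apply, Jbig,
        Matrix.of_apply, smul_eq_mul, Matrix.one_apply_ne hne1, hMpq]
      push_cast
      ring
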